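/- Let V be a complete discrete valuation ring with uniformiser π, let D be an associative (not necessarily commutative) V-algebra, and let S ⊆ D be a V-submodule whose image in D/π^k D is a finitely generated V-module for every k ∈ ℕ. Then the V-submodule S₁ := Σ_{n=0}^∞ π^n S^{n+1} of D (the V-submodule generated by all products π^n s₀ s₁ ⋯ s_n with n ∈ ℕ and s₀, …, s_n ∈ S) also has finitely generated image in D/π^k D for every k ∈ ℕ. (This is the Banach-algebra form of Lemma 4.7: if a bornological V-algebra D is semidagger, then so is D with the compactoid bornology; S₁ is the submodule of linear growth generated by S.) -/

import Mathlib

open Pointwise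

/-- `S` is a compactoid submodule of `D`: for every `k`, the image of `S` in
`D/π^k D` is finitely generated, i.e. there is a finite `F_k ⊆ D` with
`S ⊆ V·F_k + π^k D`. -/
def CompactoidIn {V : Type*} [CommRing V] (π : V) {D : Type*} [AddCommGroup D]
    [Module V D] (S : Submodule V D) : Prop :=
  ∀ k : ℕ, ∃ F : Finset D,
    S ≤ Submodule.span V (F : Set D) ⊔ π ^ k • (⊤ : Submodule V D)

/-- Banach-algebra form of Lemma 4.7 (semidagger passes to the compactoid bornology):
if `S` is a compactoid `V`-submodule of an associative `V`-algebra `D`, then the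
submodule of linear growth `S₁ = Σ_{n≥0} πⁿ S^{n+1}` generated by `S` is again
compactoid. -/
theorem compactoidIn_linear_growth
    {V : Type*} [CommRing V] [IsDomain V] [IsDiscreteValuationRing V]
    (π : V) (hπ : Irreducible π) [IsAdicComplete (Ideal.span {π}) V]
    {D : Type*} [Ring D] [Algebra V D]
    (S : Submodule V D) (hS : CompactoidIn π S) :
    CompactoidIn π (⨆ n : ℕ, π ^ n • S ^ (n + 1)) := by
  classical
  intro k
  obtain ⟨F, hF⟩ := hS k
  set B : Submodule V D := π ^ k • (⊤ : Submodule V D) with hBdef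
  have hmem : ∀ (a : V) (P : Submodule V D) (x : D), x ∈ a • P ↔ ∃ y ∈ P, a • y = x := by
    intro a P x
    rw [← SetLike.mem_coe, Submodule.coe_pointwise_smul]
    exact Set.mem_smul_set
  have hmemB : ∀ x : D, x ∈ B ↔ ∃ d : D, π ^ k • d = x := by
    intro x
    rw [hBdef, hmem]
    simp
  have hmono : ∀ (a : V) (P Q : Submodule V D), P ≤ Q → a • P ≤ a • Q := by
    intro a P Q h x hx
    obtain ⟨y, hy, rfl⟩ := (hmem a P x).1 hx
    exact Submodule.smul_mem_pointwise_smul y a Q (h hy)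
  -- B absorbs multiplication on both sides
  have hBl : ∀ X : Submodule V D, B * X ≤ B := by
    intro X
    refine Submodule.mul_le.2 fun m hm n hn => ?_
    obtain ⟨d, rfl⟩ := (hmemB m).1 hm
    rw [smul_mul_assoc]
    exact (hmemB _).2 ⟨d * n, rfl⟩
  have hBr : ∀ X : Submodule V D, X * B ≤ B := by
    intro X
    refine Submodule.mul_le.2 fun m hm n hn => ?_
    obtain ⟨d, rfl⟩ := (hmemB n).1 hn
    rw [mul_smul_comm]
    exact (hmemB _).2 ⟨m * d, rfl⟩
  have hsmulB : ∀ (a : V), a • B ≤ B := by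
    intro a x hx
    obtain ⟨y, hy, rfl⟩ := (hmem a B x).1 hx
    obtain ⟨d, rfl⟩ := (hmemB y).1 hy
    rw [smul_comm]
    exact (hmemB _).2 ⟨a • d, rfl⟩
  set A : Submodule V D := Submodule.span V (F : Set D) with hAdef
  have key : ∀ n : ℕ, (A ⊔ B) ^ (n + 1) ≤ A ^ (n + 1) ⊔ B := by
    intro n
    induction n with
    | zero => simp
    | succ n ih =>
      calc (A ⊔ B) ^ (n + 2) = (A ⊔ B) ^ (n + 1) * (A ⊔ B) := by rw [pow_succ]
        _ ≤ (A ^ (n + 1) ⊔ B) * (A ⊔ B) := mul_le_mul' ih le_rfl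
        _ = A ^ (n + 1) * A ⊔ A ^ (n + 1) * B ⊔ (B * A ⊔ B * B) := by
            rw [Submodule.sup_mul, Submodule.mul_sup, Submodule.mul_sup]
        _ ≤ A ^ (n + 2) ⊔ B := by
            apply sup_le (sup_le ?_ ?_) (sup_le ?_ ?_)
            · rw [← pow_succ]; exact le_sup_left
            · exact le_sup_of_le_right (hBr _)
            · exact le_sup_of_le_right (hBl _)
            · exact le_sup_of_le_right (hBl _)
  refine ⟨(Finset.range k).biUnion fun n => (F ^ (n + 1)).image (fun d => π ^ n • d), ?_⟩
  set G : Finset D := (Finset.range k).biUnion fun n => (F ^ (n + 1)).image (fun d => π ^ n • d)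
    with hGdef
  have hpow : ∀ m : ℕ, S ^ (m + 1) ≤ (A ⊔ B) ^ (m + 1) := by
    intro m
    induction m with
    | zero => simpa using hF
    | succ m ihm =>
      rw [pow_succ, pow_succ]
      exact mul_le_mul' ihm hF
  refine iSup_le fun n => ?_
  by_cases hn : n < k
  · have h1 : S ^ (n + 1) ≤ (A ⊔ B) ^ (n + 1) := hpow n
    have h2 : π ^ n • S ^ (n + 1) ≤ π ^ n • (A ^ (n + 1) ⊔ B) :=
      hmono _ _ _ (le_trans h1 (key n))
    have h3 : π ^ n • (A ^ (n + 1) ⊔ B) = π ^ n • A ^ (n + 1) ⊔ π ^ n • B := by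
      exact Submodule.smul_sup' _ _ _
    have h4 : π ^ n • A ^ (n + 1) ≤ Submodule.span V (G : Set D) := by
      rw [hAdef, Submodule.span_pow, Submodule.smul_span]
      apply Submodule.span_mono
      intro x hx
      obtain ⟨y, hy, rfl⟩ := hx
      simp only [hGdef, Finset.coe_biUnion, Finset.coe_image, Set.mem_iUnion]
      exact ⟨n, by simpa using hn, Set.mem_image_of_mem _ (by exact_mod_cast (Finset.coe_pow F (n+1)) ▸ hy)⟩
    calc π ^ n • S ^ (n + 1) ≤ π ^ n • A ^ (n + 1) ⊔ π ^ n • B := h3 ▸ h2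
      _ ≤ Submodule.span V (G : Set D) ⊔ B := sup_le_sup h4 (hsmulB _)
  · refine le_trans ?_ le_sup_right
    intro x hx
    obtain ⟨y, -, rfl⟩ := (hmem (π ^ n) _ x).1 hx
    have hk : k ≤ n := not_lt.1 hn
    have : π ^ n • y = π ^ k • (π ^ (n - k) • y) := by
      rw [← mul_smul, ← pow_add, Nat.add_sub_cancel' hk]
    rw [this]
    exact (hmemB _).2 ⟨_, rfl⟩
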